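/- Let F be a free group and α the periodicity abstraction as above. Then α(L₁ ∪ L₂) = α(α(L₁) ∪ α(L₂)) for all L₁, L₂ ⊆ F. -/

import Mathlib

namespace Stmt14Aux

variable {β : Type*}

/-- n-fold repetition of a list. -/
def rep (d : List β) : ℕ → List β
  | 0 => []
  | n+1 => d ++ rep d n

lemma rep_succ (d : List β) (n : ℕ) : rep d (n+1) = d ++ rep d n := rfl

lemma rep_succ' (d : List β) (n : ℕ) : rep d (n+1) = rep d n ++ d := by
  induction n with
  | zero => simp [rep]
  | succ n ih =>
    calc rep d (n+2) = d ++ rep d (n+1) := rfl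
      _ = d ++ (rep d n ++ d) := by rw [ih]
      _ = (d ++ rep d n) ++ d := by rw [List.append_assoc]
      _ = rep d (n+1) ++ d := rfl

lemma length_rep (d : List β) (n : ℕ) : (rep d n).length = n * d.length := by
  induction n with
  | zero => simp [rep]
  | succ n ih => simp [rep_succ, ih, Nat.succ_mul, Nat.add_comm]

lemma rep_add (d : List β) (m n : ℕ) : rep d (m+n) = rep d m ++ rep d n := by
  induction m with
  | zero => simp [rep]
  | succ m ih => rw [Nat.succ_add, rep_succ, ih, rep_succ, List.append_assoc]

/-- Commuting lists have a common root. -/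
lemma commute_lists_aux : ∀ (n : ℕ) (u v : List β), u.length + v.length = n →
    u ++ v = v ++ u → ∃ (d : List β) (a b : ℕ), u = rep d a ∧ v = rep d b := by
  intro n
  induction n using Nat.strong_induction_on with
  | _ n ih =>
  intro u v hn h
  rcases Nat.le_total u.length v.length with hle | hle
  · rcases List.eq_nil_or_concat u with rfl | _
    · exact ⟨v, 0, 1, rfl, by simp [rep]⟩
    · have hu : u ≠ [] := by rintro rfl; simp_all
      -- u is a prefix of v
      have hpre : u <+: v := by
        have : u <+: u ++ v := List.prefix_append u v
        rw [h] at this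
        exact List.prefix_of_prefix_length_le this (List.prefix_append v u) hle
      obtain ⟨w, rfl⟩ := hpre
      have h' : u ++ w = w ++ u :=
        List.append_cancel_left (by rw [h, List.append_assoc])
      have hlt : u.length + w.length < n := by
        have : 0 < u.length := List.length_pos_iff.2 hu
        simp only [List.length_append] at hn ⊢; omega
      obtain ⟨d, a, b, hud, hwd⟩ := ih _ hlt u w rfl h'
      exact ⟨d, a, a + b, hud, by rw [rep_add, hud, hwd]⟩
  · rcases List.eq_nil_or_concat v with rfl | _
    · exact ⟨u, 1, 0, by simp [rep], rfl⟩
    · have hv : v ≠ [] := by rintro rfl; simp_all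
      have hpre : v <+: u := by
        have : v <+: v ++ u := List.prefix_append v u
        rw [← h] at this
        exact List.prefix_of_prefix_length_le this (List.prefix_append u v) hle
      obtain ⟨w, rfl⟩ := hpre
      have h' : v ++ w = w ++ v :=
        List.append_cancel_left (by rw [← h, List.append_assoc])
      have hlt : v.length + w.length < n := by
        have : 0 < v.length := List.length_pos_iff.2 hv
        simp only [List.length_append] at hn ⊢; omega
      obtain ⟨d, a, b, hvd, hwd⟩ := ih _ hlt v w rfl h'
      exact ⟨d, a + b, a, by rw [rep_add, hvd, hwd], hvd⟩

lemma commute_lists {u v : List β} (h : u ++ v = v ++ u) :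
    ∃ (d : List β) (a b : ℕ), u = rep d a ∧ v = rep d b :=
  commute_lists_aux _ u v rfl h


lemma rep_rep (d : List β) (m n : ℕ) : rep (rep d m) n = rep d (m * n) := by
  induction n with
  | zero => simp [rep]
  | succ n ih => rw [rep_succ, ih, Nat.mul_succ, Nat.add_comm, rep_add]

lemma rep_ne_nil {d : List β} {k : ℕ} (hd : d ≠ []) (hk : 1 ≤ k) : rep d k ≠ [] := by
  cases k with
  | zero => omega
  | succ k => simp [rep_succ, hd]

lemma rep_nil (n : ℕ) : rep ([] : List β) n = [] := by
  induction n with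
  | zero => rfl
  | succ n ih => simp [rep_succ, ih]

lemma rep_comm (d : List β) (n : ℕ) : d ++ rep d n = rep d n ++ d := by
  rw [← rep_succ, rep_succ']

/-- Lyndon–Schützenberger for lists: equal powers have a common root. -/
lemma ls_aux : ∀ (n : ℕ) (u v : List β) (k m : ℕ), u.length + v.length = n →
    1 ≤ k → 1 ≤ m → rep u k = rep v m →
    ∃ (d : List β) (a b : ℕ), u = rep d a ∧ v = rep d b := by
  intro n
  induction n using Nat.strong_induction_on with
  | _ n ih =>
  intro u v k m hn hk hm heq
  rcases eq_or_ne u [] with rfl | hu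
  · have hv : rep v m = [] := by rw [← heq, rep_nil]
    have : v = [] := by by_contra hne; exact rep_ne_nil hne hm hv
    subst this; exact ⟨[], 0, 0, (rep_nil 0).symm, (rep_nil 0).symm⟩
  rcases eq_or_ne v [] with rfl | hv
  · have hu' : rep u k = [] := by rw [heq, rep_nil]
    exact absurd hu' (rep_ne_nil hu hk)
  -- main case
  rcases le_total u.length v.length with hle | hle
  · -- u is a prefix of v
    have hpre : u <+: v := by
      have h1 : u <+: rep u k := by
        cases k with
        | zero => omega
        | succ k => rw [rep_succ]; exact List.prefix_append u _
      have h2 : v <+: rep u k := by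
        rw [heq]
        cases m with
        | zero => omega
        | succ m => rw [rep_succ]; exact List.prefix_append v _
      exact List.prefix_of_prefix_length_le h1 h2 hle
    obtain ⟨w, rfl⟩ := hpre
    rcases eq_or_ne w [] with rfl | hw
    · exact ⟨u, 1, 1, by simp [rep], by simp [rep]⟩
    -- w commutes with rep u k
    have hvc : (u ++ w) ++ rep u k = rep u k ++ (u ++ w) := by
      rw [heq, ← rep_succ', ← rep_succ]
    have hcomm : w ++ rep u k = rep u k ++ w := by
      apply List.append_cancel_left (as := u)
      calc u ++ (w ++ rep u k) = (u ++ w) ++ rep u k := by rw [List.append_assoc]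
        _ = rep u k ++ (u ++ w) := hvc
        _ = (rep u k ++ u) ++ w := by rw [List.append_assoc]
        _ = (u ++ rep u k) ++ w := by rw [rep_comm]
        _ = u ++ (rep u k ++ w) := by rw [List.append_assoc]
    obtain ⟨d, a, b, hwd, hud⟩ := commute_lists hcomm
    have hd : d ≠ [] := by rintro rfl; rw [rep_nil] at hwd; exact hw hwd
    have ha : 1 ≤ a := by
      rcases Nat.eq_zero_or_pos a with rfl | h; · exact absurd hwd hw
      exact h
    have hb : 1 ≤ b := by
      rcases Nat.eq_zero_or_pos b with rfl | h
      · exact absurd hud (rep_ne_nil hu hk)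
      exact h
    have hdw : d.length ≤ w.length := by
      rw [hwd, length_rep]; nlinarith [List.length_pos_iff.2 hd]
    have hlt : u.length + d.length < n := by
      have h1 : 0 < u.length := List.length_pos_iff.2 hu
      have h2 : 0 < w.length := List.length_pos_iff.2 hw
      simp only [List.length_append] at hn; omega
    obtain ⟨e, p, q, hue, hde⟩ := ih _ hlt u d k b rfl hk hb hud
    refine ⟨e, p, p + q * a, hue, ?_⟩
    rw [rep_add, ← hue, ← rep_rep, ← hde, ← hwd]
  · -- symmetric: v is a prefix of u
    have hpre : v <+: u := by
      have h1 : v <+: rep v m := by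
        cases m with
        | zero => omega
        | succ m => rw [rep_succ]; exact List.prefix_append v _
      have h2 : u <+: rep v m := by
        rw [← heq]
        cases k with
        | zero => omega
        | succ k => rw [rep_succ]; exact List.prefix_append u _
      exact List.prefix_of_prefix_length_le h1 h2 hle
    obtain ⟨w, rfl⟩ := hpre
    rcases eq_or_ne w [] with rfl | hw
    · exact ⟨v, 1, 1, by simp [rep], by simp [rep]⟩
    have hvc : (v ++ w) ++ rep v m = rep v m ++ (v ++ w) := by
      rw [← heq, ← rep_succ', ← rep_succ]
    have hcomm : w ++ rep v m = rep v m ++ w := by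
      apply List.append_cancel_left (as := v)
      calc v ++ (w ++ rep v m) = (v ++ w) ++ rep v m := by rw [List.append_assoc]
        _ = rep v m ++ (v ++ w) := hvc
        _ = (rep v m ++ v) ++ w := by rw [List.append_assoc]
        _ = (v ++ rep v m) ++ w := by rw [rep_comm]
        _ = v ++ (rep v m ++ w) := by rw [List.append_assoc]
    obtain ⟨d, a, b, hwd, hvd⟩ := commute_lists hcomm
    have hd : d ≠ [] := by rintro rfl; rw [rep_nil] at hwd; exact hw hwd
    have hb : 1 ≤ b := by
      rcases Nat.eq_zero_or_pos b with rfl | h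
      · exact absurd hvd (rep_ne_nil hv hm)
      exact h
    have hdw : d.length ≤ w.length := by
      have ha : 1 ≤ a := by
        rcases Nat.eq_zero_or_pos a with rfl | h; · exact absurd hwd hw
        exact h
      rw [hwd, length_rep]; nlinarith [List.length_pos_iff.2 hd]
    have hlt : v.length + d.length < n := by
      have h1 : 0 < v.length := List.length_pos_iff.2 hv
      have h2 : 0 < w.length := List.length_pos_iff.2 hw
      simp only [List.length_append] at hn; omega
    obtain ⟨e, p, q, hve, hde⟩ := ih _ hlt v d m b rfl hm hb hvd
    refine ⟨e, p + q * a, p, ?_, hve⟩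
    rw [rep_add, ← hve, ← rep_rep, ← hde, ← hwd]

lemma ls {u v : List β} {k m : ℕ} (hk : 1 ≤ k) (hm : 1 ≤ m) (heq : rep u k = rep v m) :
    ∃ (d : List β) (a b : ℕ), u = rep d a ∧ v = rep d b :=
  ls_aux _ u v k m rfl hk hm heq


section Words
variable {α : Type*} [DecidableEq α]
open FreeGroup

/-- The "no cancellation" relation on adjacent letters. -/
def NC (x y : α × Bool) : Prop := ¬(x.1 = y.1 ∧ x.2 = !y.2)

lemma nc_symm {x y : α × Bool} (h : NC x y) : NC y x := by
  unfold NC at *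
  rintro ⟨h1, h2⟩
  exact h ⟨h1.symm, by rw [h2]; simp⟩

/-- Reduced words. -/
def Rd (L : List (α × Bool)) : Prop := List.Chain' NC L

lemma rd_nil : Rd ([] : List (α × Bool)) := List.isChain_nil

lemma reduce_eq_self_of_rd : ∀ {L : List (α × Bool)}, Rd L → reduce L = L
  | [], _ => rfl
  | x :: L, h => by
    have hL : Rd L := (List.isChain_cons.1 h).2
    rw [reduce.cons, reduce_eq_self_of_rd hL]
    cases L with
    | nil => rfl
    | cons y t =>
      have hxy : NC x y := (List.isChain_cons_cons.1 h).1
      simp only [List.casesOn]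
      rw [if_neg hxy]

lemma rd_reduce : ∀ (L : List (α × Bool)), Rd (reduce L)
  | [] => rd_nil
  | x :: L => by
    have ih := rd_reduce L
    rw [reduce.cons]
    cases hL : reduce L with
    | nil => exact List.isChain_singleton x
    | cons y t =>
      rw [hL] at ih
      by_cases hxy : x.1 = y.1 ∧ x.2 = !y.2
      · simp only [if_pos hxy]
        exact (List.isChain_cons.1 ih).2
      · simp only [if_neg hxy]
        exact List.isChain_cons_cons.2 ⟨hxy, ih⟩

lemma rd_toWord (x : FreeGroup α) : Rd x.toWord := by
  rw [← reduce_toWord]; exact rd_reduce _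

lemma toWord_mk_of_rd {L : List (α × Bool)} (h : Rd L) : (mk L).toWord = L := by
  rw [toWord_mk, reduce_eq_self_of_rd h]

lemma invRev_cons (x : α × Bool) (L : List (α × Bool)) :
    invRev (x :: L) = invRev L ++ [(x.1, !x.2)] := by
  simp [invRev]

/-- Cyclically reduced words. -/
def CR (C : List (α × Bool)) : Prop :=
  Rd C ∧ ∀ x ∈ C.getLast?, ∀ y ∈ C.head?, NC x y

lemma head?_rep {C : List (α × Bool)} (hC : C ≠ []) {n : ℕ} (hn : 1 ≤ n) :
    (rep C n).head? = C.head? := by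
  cases n with
  | zero => omega
  | succ n =>
    rw [rep_succ, List.head?_append]
    obtain ⟨c, hc⟩ := List.exists_mem_of_ne_nil C hC
    cases h : C.head? with
    | none => rw [List.head?_eq_none_iff] at h; exact absurd h hC
    | some c => rfl

lemma getLast?_rep {C : List (α × Bool)} (hC : C ≠ []) {n : ℕ} (hn : 1 ≤ n) :
    (rep C n).getLast? = C.getLast? := by
  cases n with
  | zero => omega
  | succ n =>
    rw [rep_succ', List.getLast?_append]
    cases h : C.getLast? with
    | none => rw [List.getLast?_eq_none_iff] at h; exact absurd h hC
    | some c => rfl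

lemma rd_rep {C : List (α × Bool)} (h : CR C) : ∀ n, Rd (rep C n) := by
  intro n
  rcases eq_or_ne C [] with rfl | hC
  · rw [rep_nil]; exact rd_nil
  induction n with
  | zero => exact rd_nil
  | succ n ih =>
    rw [rep_succ]
    refine List.IsChain.append h.1 ih ?_
    intro x hx y hy
    rcases Nat.eq_zero_or_pos n with rfl | hn
    · rw [rep] at hy; simp at hy
    · rw [head?_rep hC hn] at hy
      exact h.2 x hx y hy

lemma cr_rep {C : List (α × Bool)} (h : CR C) (hC : C ≠ []) {n : ℕ} (hn : 1 ≤ n) :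
    CR (rep C n) := by
  refine ⟨rd_rep h n, ?_⟩
  rw [head?_rep hC hn, getLast?_rep hC hn]
  exact h.2

lemma rd_infix {L M : List (α × Bool)} (h : Rd L) (h' : M <:+: L) : Rd M :=
  List.IsChain.infix h h'

lemma last_snoc (l : List (α × Bool)) (a : α × Bool) : (l ++ [a]).getLast? = some a := by
  simp

/-- Existence of the cyclically reduced decomposition. -/
lemma decomp_exists_aux : ∀ (n : ℕ) (W : List (α × Bool)), W.length = n → Rd W →
    ∃ S C, W = S ++ C ++ invRev S ∧ CR C ∧ (W ≠ [] → C ≠ []) := by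
  intro n
  induction n using Nat.strong_induction_on with
  | _ n ih =>
  intro W hn hW
  by_cases hCR : CR W
  · exact ⟨[], W, by simp [invRev_empty], hCR, fun h => h⟩
  · have hJ : ¬ (∀ x ∈ W.getLast?, ∀ y ∈ W.head?, NC x y) := fun hj => hCR ⟨hW, hj⟩
    push_neg at hJ
    obtain ⟨x, hx, y, hy, hxy⟩ := hJ
    rw [NC, not_not] at hxy
    cases W with
    | nil => simp at hy
    | cons y' T =>
      have hy' : y' = y := by simpa using hy
      subst hy'
      rcases List.eq_nil_or_concat T with rfl | ⟨M, x', rfl⟩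
      · -- W = [y']; last = head, contradiction with Bool
        have hxe : x = y' := Eq.symm (by simpa using hx)
        subst hxe
        simp at hxy
      · rw [List.concat_eq_append] at hn hW hCR hx ⊢
        have hx' : x' = x := by
          have h2 : (y' :: (M ++ [x'])).getLast? = some x' := by
            rw [← List.cons_append, last_snoc]
          rw [Option.mem_def, h2] at hx
          exact Option.some_inj.1 hx
        subst hx'
        have hxpair : x' = (y'.1, !y'.2) := by
          obtain ⟨h1, h2⟩ := hxy
          cases x'; simp_all
        have hMinfix : M <:+: y' :: (M ++ [x']) := ⟨[y'], [x'], by simp⟩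
        have hM : Rd M := rd_infix hW hMinfix
        have hMne : M ≠ [] := by
          rintro rfl
          have := (List.isChain_cons_cons.1 hW).1
          rw [hxpair] at this
          exact this ⟨rfl, by simp⟩
        have hlen : M.length < n := by
          rw [← hn]; simp
        obtain ⟨S', C', hM_eq, hC', hC'ne⟩ := ih _ hlen M rfl hM
        refine ⟨y' :: S', C', ?_, hC', fun _ => hC'ne hMne⟩
        rw [invRev_cons, ← hxpair, hM_eq]
        simp [List.append_assoc]

lemma decomp_exists {W : List (α × Bool)} (hW : Rd W) :
    ∃ S C, W = S ++ C ++ invRev S ∧ CR C ∧ (W ≠ [] → C ≠ []) :=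
  decomp_exists_aux _ W rfl hW

/-- Uniqueness of the cyclically reduced decomposition. -/
lemma decomp_unique : ∀ (S₁ C₁ S₂ C₂ : List (α × Bool)),
    Rd (S₁ ++ C₁ ++ invRev S₁) → CR C₁ → CR C₂ → C₁ ≠ [] → C₂ ≠ [] →
    S₁ ++ C₁ ++ invRev S₁ = S₂ ++ C₂ ++ invRev S₂ → S₁ = S₂ ∧ C₁ = C₂ := by
  intro S₁
  induction S₁ with
  | nil =>
    intro C₁ S₂ C₂ hRd hC₁ hC₂ hne₁ hne₂ heq
    cases S₂ with
    | nil =>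
      simp only [invRev_empty, List.nil_append, List.append_nil] at heq
      exact ⟨rfl, heq⟩
    | cons z S₂' =>
      exfalso
      rw [invRev_cons] at heq
      have hC₁eq : C₁ = z :: ((S₂' ++ C₂ ++ invRev S₂') ++ [(z.1, !z.2)]) := by
        simpa [invRev_empty, List.append_assoc] using heq
      have hhead : C₁.head? = some z := by rw [hC₁eq]; rfl
      have hlast : C₁.getLast? = some (z.1, !z.2) := by
        rw [hC₁eq, ← List.cons_append, last_snoc]
      have := hC₁.2 _ hlast _ hhead
      exact this ⟨rfl, by simp⟩
  | cons z S₁' ih =>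
    intro C₁ S₂ C₂ hRd hC₁ hC₂ hne₁ hne₂ heq
    have e₁ : (z :: S₁') ++ C₁ ++ invRev (z :: S₁') =
        z :: ((S₁' ++ C₁ ++ invRev S₁') ++ [(z.1, !z.2)]) := by
      rw [invRev_cons]; simp [List.append_assoc]
    cases S₂ with
    | nil =>
      exfalso
      rw [e₁] at heq
      have hC₂eq : C₂ = z :: ((S₁' ++ C₁ ++ invRev S₁') ++ [(z.1, !z.2)]) := by
        simpa [invRev_empty, List.append_assoc] using heq.symm
      have hhead : C₂.head? = some z := by rw [hC₂eq]; rfl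
      have hlast : C₂.getLast? = some (z.1, !z.2) := by
        rw [hC₂eq, ← List.cons_append, last_snoc]
      have := hC₂.2 _ hlast _ hhead
      exact this ⟨rfl, by simp⟩
    | cons w S₂' =>
      have e₂ : (w :: S₂') ++ C₂ ++ invRev (w :: S₂') =
          w :: ((S₂' ++ C₂ ++ invRev S₂') ++ [(w.1, !w.2)]) := by
        rw [invRev_cons]; simp [List.append_assoc]
      rw [e₁, e₂] at heq
      obtain ⟨hzw, htail⟩ := List.cons_eq_cons.mp heq
      subst hzw
      have hA : S₁' ++ C₁ ++ invRev S₁' = S₂' ++ C₂ ++ invRev S₂' :=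
        List.append_cancel_right htail
      rw [e₁] at hRd
      have hRd' : Rd (S₁' ++ C₁ ++ invRev S₁') :=
        rd_infix hRd ⟨[z], [(z.1, !z.2)], by simp⟩
      obtain ⟨hS, hC⟩ := ih C₁ S₂' C₂ hRd' hC₁ hC₂ hne₁ hne₂ hA
      exact ⟨by rw [hS], hC⟩


lemma head?_append_left {C X : List (α × Bool)} (hC : C ≠ []) :
    (C ++ X).head? = C.head? := by
  cases C with
  | nil => exact absurd rfl hC
  | cons c t => rfl

lemma getLast?_append_right {C X : List (α × Bool)} (hX : X ≠ []) :
    (C ++ X).getLast? = X.getLast? := by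
  rw [List.getLast?_append]
  cases h : X.getLast? with
  | none => rw [List.getLast?_eq_none_iff] at h; exact absurd h hX
  | some c => rfl

lemma mk_rep (C : List (α × Bool)) (n : ℕ) : FreeGroup.mk (rep C n) = (FreeGroup.mk C) ^ n := by
  induction n with
  | zero => rw [pow_zero]; rfl
  | succ n ih => rw [rep_succ, ← FreeGroup.mul_mk, ih, pow_succ']

lemma rd_conj_rep {S C : List (α × Bool)} (hRdW : Rd (S ++ C ++ invRev S))
    (hCR : CR C) (hC : C ≠ []) {n : ℕ} (hn : 1 ≤ n) :
    Rd (S ++ rep C n ++ invRev S) := by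
  have hRdW' : Rd (S ++ (C ++ invRev S)) := by rwa [List.append_assoc] at hRdW
  have hS : Rd S := (List.isChain_append.1 hRdW').1
  have hCI : Rd (C ++ invRev S) := (List.isChain_append.1 hRdW').2.1
  have hI : Rd (invRev S) := (List.isChain_append.1 hCI).2.1
  have hJ1 : ∀ a ∈ S.getLast?, ∀ b ∈ C.head?, NC a b := by
    intro a ha b hb
    refine (List.isChain_append.1 hRdW').2.2 a ha b ?_
    rwa [head?_append_left hC]
  have hJ2 : ∀ a ∈ C.getLast?, ∀ b ∈ (invRev S).head?, NC a b :=
    (List.isChain_append.1 hCI).2.2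
  rw [List.append_assoc]
  refine List.IsChain.append hS (List.IsChain.append (rd_rep hCR n) hI ?_) ?_
  · intro a ha b hb
    rw [getLast?_rep hC hn] at ha
    exact hJ2 a ha b hb
  · intro a ha b hb
    rw [head?_append_left (rep_ne_nil hC hn), head?_rep hC hn] at hb
    exact hJ1 a ha b hb

lemma pow_toWord {x : FreeGroup α} {S C : List (α × Bool)}
    (hW : x.toWord = S ++ C ++ invRev S) (hCR : CR C) (hC : C ≠ []) {n : ℕ} (hn : 1 ≤ n) :
    (x ^ n).toWord = S ++ rep C n ++ invRev S := by
  have hRdW : Rd (S ++ C ++ invRev S) := hW ▸ rd_toWord x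
  have hx : x = FreeGroup.mk S * FreeGroup.mk C * (FreeGroup.mk S)⁻¹ := by
    rw [FreeGroup.inv_mk, FreeGroup.mul_mk, FreeGroup.mul_mk, ← hW, FreeGroup.mk_toWord]
  have hxn : x ^ n = FreeGroup.mk S * (FreeGroup.mk C) ^ n * (FreeGroup.mk S)⁻¹ := by
    rw [hx, conj_pow]
  rw [hxn, ← mk_rep, FreeGroup.inv_mk, FreeGroup.mul_mk, FreeGroup.mul_mk]
  exact toWord_mk_of_rd (rd_conj_rep hRdW hCR hC hn)

lemma pow_eq_one_iff {x : FreeGroup α} {n : ℕ} (hn : 1 ≤ n) (h : x ^ n = 1) : x = 1 := by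
  by_contra hx
  have hne : x.toWord ≠ [] := fun h' => hx (FreeGroup.toWord_eq_nil_iff.1 h')
  obtain ⟨S, C, hW, hCR, hCne⟩ := decomp_exists (rd_toWord x)
  have hC : C ≠ [] := hCne hne
  have := pow_toWord hW hCR hC hn
  rw [h, FreeGroup.toWord_one] at this
  have : rep C n = [] := by
    rcases List.append_eq_nil_iff.mp (List.append_eq_nil_iff.mp this.symm).1 with ⟨_, h2⟩
    exact h2
  exact rep_ne_nil hC hn this

lemma zpow_eq_one_iff {x : FreeGroup α} {k : ℤ} (hk : k ≠ 0) (h : x ^ k = 1) : x = 1 := by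
  rcases lt_or_gt_of_ne hk with hneg | hpos
  · have h1 : x ^ ((-k).toNat) = 1 := by
      have : ((-k).toNat : ℤ) = -k := Int.toNat_of_nonneg (by omega)
      rw [← zpow_natCast, this, zpow_neg, h, inv_one]
    exact pow_eq_one_iff (by omega) h1
  · have h1 : x ^ (k.toNat) = 1 := by
      have : ((k).toNat : ℤ) = k := Int.toNat_of_nonneg (by omega)
      rw [← zpow_natCast, this, h]
    exact pow_eq_one_iff (by omega) h1

/-- Common root theorem, natural exponents. -/
lemma common_root_nat {x y : FreeGroup α} {n m : ℕ} (hn : 1 ≤ n) (hm : 1 ≤ m)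
    (h : x ^ n = y ^ m) : ∃ (z : FreeGroup α) (a b : ℕ), x = z ^ a ∧ y = z ^ b := by
  rcases eq_or_ne x 1 with rfl | hx
  · have : y = 1 := pow_eq_one_iff hm (by rw [← h, one_pow])
    exact ⟨1, 0, 0, by simp, by simp [this]⟩
  rcases eq_or_ne y 1 with rfl | hy
  · have : x = 1 := pow_eq_one_iff hn (by rw [h, one_pow])
    exact absurd this hx
  obtain ⟨Sx, Cx, hWx, hCRx, hCxne⟩ := decomp_exists (rd_toWord x)
  obtain ⟨Sy, Cy, hWy, hCRy, hCyne⟩ := decomp_exists (rd_toWord y)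
  have hCx : Cx ≠ [] := hCxne (fun h' => hx (FreeGroup.toWord_eq_nil_iff.1 h'))
  have hCy : Cy ≠ [] := hCyne (fun h' => hy (FreeGroup.toWord_eq_nil_iff.1 h'))
  have h1 := pow_toWord hWx hCRx hCx hn
  have h2 := pow_toWord hWy hCRy hCy hm
  have heq : Sx ++ rep Cx n ++ invRev Sx = Sy ++ rep Cy m ++ invRev Sy := by
    rw [← h1, ← h2, h]
  have hRd1 : Rd (Sx ++ rep Cx n ++ invRev Sx) := by
    rw [← h1]; exact rd_toWord _
  obtain ⟨hSS, hCC⟩ := decomp_unique Sx (rep Cx n) Sy (rep Cy m) hRd1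
    (cr_rep hCRx hCx hn) (cr_rep hCRy hCy hm)
    (rep_ne_nil hCx hn) (rep_ne_nil hCy hm) heq
  obtain ⟨d, a, b, hda, hdb⟩ := ls hn hm hCC
  refine ⟨FreeGroup.mk Sx * FreeGroup.mk d * (FreeGroup.mk Sx)⁻¹, a, b, ?_, ?_⟩
  · rw [conj_pow, ← mk_rep, ← hda]
    rw [FreeGroup.inv_mk, FreeGroup.mul_mk, FreeGroup.mul_mk, ← hWx, FreeGroup.mk_toWord]
  · rw [conj_pow, ← mk_rep, ← hdb]
    rw [FreeGroup.inv_mk, FreeGroup.mul_mk, FreeGroup.mul_mk, hSS, ← hWy, FreeGroup.mk_toWord]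

/-- Common root theorem, integer exponents. -/
lemma common_root {x y : FreeGroup α} {k m : ℤ} (hk : k ≠ 0) (hm : m ≠ 0)
    (h : x ^ k = y ^ m) : ∃ (z : FreeGroup α) (a b : ℤ), x = z ^ a ∧ y = z ^ b := by
  have key : ∀ (w : FreeGroup α) (j : ℤ), j ≠ 0 →
      ∃ (w' : FreeGroup α) (nj : ℕ) (s : ℤ), 1 ≤ nj ∧ w' ^ nj = w ^ j ∧
        ∀ (z : FreeGroup α) (c : ℕ), w' = z ^ c → w = z ^ (s * c) := by
    intro w j hj
    rcases lt_or_gt_of_ne hj with hneg | hpos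
    · refine ⟨w⁻¹, (-j).toNat, -1, by omega, ?_, ?_⟩
      · have hj' : (((-j).toNat : ℤ)) = -j := Int.toNat_of_nonneg (by omega)
        rw [← zpow_natCast, hj', zpow_neg, inv_zpow, inv_inv]
      · intro z c hc
        have : w = (z ^ c)⁻¹ := by rw [← hc, inv_inv]
        rw [this, ← zpow_natCast, ← zpow_neg, neg_one_mul]
    · refine ⟨w, j.toNat, 1, by omega, ?_, ?_⟩
      · have hj' : ((j.toNat : ℤ)) = j := Int.toNat_of_nonneg (by omega)
        rw [← zpow_natCast, hj']
      · intro z c hc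
        rw [hc, ← zpow_natCast, one_mul]
  obtain ⟨x', nk, sx, hnk, hxk, hxs⟩ := key x k hk
  obtain ⟨y', nm, sy, hnm, hym, hys⟩ := key y m hm
  obtain ⟨z, a, b, hza, hzb⟩ := common_root_nat hnk hnm (by rw [hxk, hym, h])
  exact ⟨z, sx * a, sy * b, hxs z a hza, hys z b hzb⟩

end Words

end Stmt14Aux



open scoped Pointwise

/-- An element `p` of a free group is primitive if it is nontrivial and its only
roots are `p` itself and `p⁻¹`. -/
def IsPrimitiveElt {A : Type*} (p : FreeGroup A) : Prop :=
  p ≠ 1 ∧ ∀ (w : FreeGroup A) (l : ℤ), w ^ l = p → w = p ∨ w = p⁻¹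

/-- The coset `v·⟨p⟩ = {v * p^k : k ∈ ℤ}`. -/
def coset {A : Type*} (v p : FreeGroup A) : Set (FreeGroup A) :=
  {x | ∃ k : ℤ, x = v * p ^ k}

/-- A free group element is cyclically reduced if its reduced word does not begin
and end with mutually inverse letters. -/
def CyclicallyReduced {A : Type*} [DecidableEq A] (w : FreeGroup A) : Prop :=
  ∀ x y : A × Bool, w.toWord.head? = some x → w.toWord.getLast? = some y →
    ¬(x.1 = y.1 ∧ x.2 = !y.2)

open scoped Classical in
/-- The periodicity abstraction. -/
noncomputable def alpha {A : Type*} (L : Set (FreeGroup A)) : Set (FreeGroup A) :=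
  if L = ∅ then ∅
  else if ∃ g : FreeGroup A, L = {g} then L
  else if h : ∃ g p : FreeGroup A, IsPrimitiveElt p ∧ L ⊆ coset g p then
    coset h.choose h.choose_spec.choose
  else Set.univ


namespace Stmt14Aux

lemma prim_pow_eq {A : Type*} {p q : FreeGroup A} (hp : IsPrimitiveElt p)
    (hq : IsPrimitiveElt q) {k m : ℤ} (hk : k ≠ 0) (hm : m ≠ 0) (h : p ^ k = q ^ m) :
    q = p ∨ q = p⁻¹ := by
  classical
  obtain ⟨z, a, b, hza, hzb⟩ := common_root hk hm h
  have key : ∃ c : ℤ, q = p ^ c := by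
    rcases hp.2 z a hza.symm with rfl | rfl
    · exact ⟨b, hzb⟩
    · exact ⟨-b, by rw [zpow_neg, ← inv_zpow, ← hzb]⟩
  obtain ⟨c, hc⟩ := key
  rcases hq.2 p c hc.symm with h' | h'
  · exact Or.inl h'.symm
  · right; rw [h', inv_inv]

lemma mem_coset_self {A : Type*} (g p : FreeGroup A) : g ∈ coset g p :=
  ⟨0, by simp⟩

lemma coset_eq_of_mem {A : Type*} {g p x : FreeGroup A} (hx : x ∈ coset g p) :
    coset g p = coset x p := by
  obtain ⟨i, rfl⟩ := hx
  ext t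
  constructor
  · rintro ⟨j, rfl⟩
    exact ⟨j - i, by rw [mul_assoc, ← zpow_add]; ring_nf⟩
  · rintro ⟨j, rfl⟩
    exact ⟨i + j, by rw [mul_assoc, ← zpow_add]⟩

lemma coset_inv_gen {A : Type*} (g p : FreeGroup A) : coset g p⁻¹ = coset g p := by
  ext t
  constructor
  · rintro ⟨j, rfl⟩; exact ⟨-j, by rw [inv_zpow, zpow_neg]⟩
  · rintro ⟨j, rfl⟩; exact ⟨-j, by rw [inv_zpow, zpow_neg, inv_inv]⟩

lemma coset_eq_coset {A : Type*} {g g' p q x y : FreeGroup A}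
    (hp : IsPrimitiveElt p) (hq : IsPrimitiveElt q)
    (hx : x ∈ coset g p) (hx' : x ∈ coset g' q)
    (hy : y ∈ coset g p) (hy' : y ∈ coset g' q) (hxy : x ≠ y) :
    coset g p = coset g' q := by
  obtain ⟨i, hi⟩ := hx
  obtain ⟨j, hj⟩ := hy
  obtain ⟨i', hi'⟩ := hx'
  obtain ⟨j', hj'⟩ := hy'
  have hxgp : x ∈ coset g p := ⟨i, hi⟩
  have hxg'q : x ∈ coset g' q := ⟨i', hi'⟩
  have hxval : x⁻¹ * y = p ^ (j - i) := by
    rw [hi, hj, mul_inv_rev, mul_assoc, inv_mul_cancel_left, ← zpow_neg, ← zpow_add]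
    ring_nf
  have hxval' : x⁻¹ * y = q ^ (j' - i') := by
    rw [hi', hj', mul_inv_rev, mul_assoc, inv_mul_cancel_left, ← zpow_neg, ← zpow_add]
    ring_nf
  have hji : j - i ≠ 0 := by
    intro h0
    apply hxy
    rw [hi, hj, show j = i by omega]
  have hji' : j' - i' ≠ 0 := by
    intro h0
    apply hxy
    rw [hi', hj', show j' = i' by omega]
  have hpq : q = p ∨ q = p⁻¹ :=
    prim_pow_eq hp hq hji hji' (by rw [← hxval, ← hxval'])
  have hq' : coset g' q = coset g' p := by
    rcases hpq with rfl | rfl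
    · rfl
    · exact coset_inv_gen g' p
  rw [hq', coset_eq_of_mem (hq' ▸ hxg'q : x ∈ coset g' p), ← coset_eq_of_mem hxgp]

lemma alpha_empty {A : Type*} : alpha (∅ : Set (FreeGroup A)) = ∅ := by
  rw [alpha, if_pos rfl]

lemma alpha_singleton {A : Type*} (g : FreeGroup A) : alpha ({g} : Set (FreeGroup A)) = {g} := by
  rw [alpha, if_neg (Set.singleton_nonempty g).ne_empty, if_pos ⟨g, rfl⟩]

lemma alpha_subset {A : Type*} (L : Set (FreeGroup A)) : L ⊆ alpha L := by
  rw [alpha]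
  split_ifs with h1 h2 h3
  · rw [h1]
  · exact subset_rfl
  · exact h3.choose_spec.choose_spec.2
  · exact Set.subset_univ L

lemma alpha_eq_coset {A : Type*} {L : Set (FreeGroup A)} {x y g p : FreeGroup A}
    (hx : x ∈ L) (hy : y ∈ L) (hxy : x ≠ y)
    (hp : IsPrimitiveElt p) (hs : L ⊆ coset g p) : alpha L = coset g p := by
  have h1 : L ≠ ∅ := fun h => by rw [h] at hx; exact hx
  have h2 : ¬∃ g' : FreeGroup A, L = {g'} := by
    rintro ⟨g', rfl⟩
    exact hxy (hx.trans hy.symm)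
  have h3 : ∃ g' p' : FreeGroup A, IsPrimitiveElt p' ∧ L ⊆ coset g' p' := ⟨g, p, hp, hs⟩
  rw [alpha, if_neg h1, if_neg h2, dif_pos h3]
  obtain ⟨hp', hs'⟩ := h3.choose_spec.choose_spec
  exact coset_eq_coset hp' hp (hs' hx) (hs hx) (hs' hy) (hs hy) hxy

lemma alpha_eq_univ {A : Type*} {L : Set (FreeGroup A)} {x y : FreeGroup A}
    (hx : x ∈ L) (hy : y ∈ L) (hxy : x ≠ y)
    (hc : ¬∃ g p : FreeGroup A, IsPrimitiveElt p ∧ L ⊆ coset g p) : alpha L = Set.univ := by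
  have h1 : L ≠ ∅ := fun h => by rw [h] at hx; exact hx
  have h2 : ¬∃ g' : FreeGroup A, L = {g'} := by
    rintro ⟨g', rfl⟩
    exact hxy (hx.trans hy.symm)
  rw [alpha, if_neg h1, if_neg h2, dif_neg hc]

lemma alpha_subset_coset {A : Type*} {L : Set (FreeGroup A)} {g p : FreeGroup A}
    (hp : IsPrimitiveElt p) (hs : L ⊆ coset g p) : alpha L ⊆ coset g p := by
  rcases L.eq_empty_or_nonempty with rfl | ⟨x, hx⟩
  · rw [alpha_empty]; exact Set.empty_subset _
  by_cases hone : ∀ y ∈ L, y = x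
  · have : L = {x} := Set.eq_singleton_iff_unique_mem.2 ⟨hx, hone⟩
    rw [this, alpha_singleton]
    rw [this] at hs; exact hs
  · push_neg at hone
    obtain ⟨y, hy, hyx⟩ := hone
    rw [alpha_eq_coset hx hy (Ne.symm hyx) hp hs]

end Stmt14Aux

theorem stmt14 {A : Type*} (L₁ L₂ : Set (FreeGroup A)) :
    alpha (L₁ ∪ L₂) = alpha (alpha L₁ ∪ alpha L₂) := by
  classical
  have hST : L₁ ∪ L₂ ⊆ alpha L₁ ∪ alpha L₂ :=
    Set.union_subset_union (Stmt14Aux.alpha_subset L₁) (Stmt14Aux.alpha_subset L₂)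
  rcases (L₁ ∪ L₂).eq_empty_or_nonempty with hS | ⟨x, hx⟩
  · obtain ⟨h1, h2⟩ := Set.union_empty_iff.1 hS
    rw [h1, h2]
    simp [Stmt14Aux.alpha_empty]
  by_cases hone : ∀ y ∈ L₁ ∪ L₂, y = x
  · have hL1 : alpha L₁ = L₁ := by
      rcases (Set.subset_singleton_iff_eq).1
        (fun z hz => hone z (Set.mem_union_left _ hz)) with h | h
      · rw [h, Stmt14Aux.alpha_empty]
      · rw [h, Stmt14Aux.alpha_singleton]
    have hL2 : alpha L₂ = L₂ := by
      rcases (Set.subset_singleton_iff_eq).1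
        (fun z hz => hone z (Set.mem_union_right _ hz)) with h | h
      · rw [h, Stmt14Aux.alpha_empty]
      · rw [h, Stmt14Aux.alpha_singleton]
    rw [hL1, hL2]
  · push_neg at hone
    obtain ⟨y, hy, hyx⟩ := hone
    have hxT : x ∈ alpha L₁ ∪ alpha L₂ := hST hx
    have hyT : y ∈ alpha L₁ ∪ alpha L₂ := hST hy
    by_cases hc : ∃ g p : FreeGroup A, IsPrimitiveElt p ∧ L₁ ∪ L₂ ⊆ coset g p
    · obtain ⟨g, p, hp, hs⟩ := hc
      have hTsub : alpha L₁ ∪ alpha L₂ ⊆ coset g p :=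
        Set.union_subset
          (Stmt14Aux.alpha_subset_coset hp ((Set.subset_union_left).trans hs))
          (Stmt14Aux.alpha_subset_coset hp ((Set.subset_union_right).trans hs))
      rw [Stmt14Aux.alpha_eq_coset hx hy (Ne.symm hyx) hp hs,
        Stmt14Aux.alpha_eq_coset hxT hyT (Ne.symm hyx) hp hTsub]
    · have hc' : ¬∃ g p : FreeGroup A, IsPrimitiveElt p ∧ alpha L₁ ∪ alpha L₂ ⊆ coset g p := by
        rintro ⟨g, p, hp, h⟩
        exact hc ⟨g, p, hp, hST.trans h⟩
      rw [Stmt14Aux.alpha_eq_univ hx hy (Ne.symm hyx) hc,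
        Stmt14Aux.alpha_eq_univ hxT hyT (Ne.symm hyx) hc']
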